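/- Let A be a unital Banach algebra and X a unit-linked Banach A-bimodule. Suppose f : A → X with f(0) = 0, g : A → X with g(0) = g(1) = 0, and φ : A × A × A → ℝ≥0 satisfy: max{‖f(λa + λb + c²) − λf(a) − λf(b) − c·f(c) − g(c)·c‖, ‖g(λab + λc) − λa·g(b) − λ·g(a)·b − λg(c)‖} ≤ φ(a,b,c) for all a,b,c ∈ A and all λ ∈ ℂ with |λ| = 1, and that φ̃(a,b,c) := (1/2) Σ_{i=0}^∞ 2^{−i} φ(2^i a, 2^i b, 2^i c) < ∞ for all a,b,c. Then for every a ∈ A the limit d(a) := lim_{n→∞} 2^{−n} f(2^n a) exists, and d is the unique generalized Jordan derivation with ‖f(a) − d(a)‖ ≤ φ̃(a,a,0) for all a ∈ A. -/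

import Mathlib

open Filter Topology MulOpposite

set_option linter.unusedSectionVars false
set_option linter.unusedVariables false
set_option maxHeartbeats 1000000

section

variable {A X : Type*}
  [NormedRing A] [NormedAlgebra ℂ A] [CompleteSpace A]
  [NormedAddCommGroup X] [NormedSpace ℂ X] [CompleteSpace X]
  [Module A X] [Module Aᵐᵒᵖ X]
  [IsBoundedSMul A X] [IsBoundedSMul Aᵐᵒᵖ X]
  [SMulCommClass A Aᵐᵒᵖ X]
  [IsScalarTower ℂ A X] [IsScalarTower ℂ Aᵐᵒᵖ X]

/-- A Jordan derivation from `A` into the bimodule `X`: a `ℂ`-linear map `δ` with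
`δ(a²) = a·δ(a) + δ(a)·a`. -/
def IsJordanDeriv (δ : A → X) : Prop :=
  (∀ x y : A, δ (x + y) = δ x + δ y) ∧ (∀ (μ : ℂ) (x : A), δ (μ • x) = μ • δ x) ∧
    ∀ a : A, δ (a ^ 2) = a • δ a + op a • δ a

/-- A generalized Jordan derivation: a `ℂ`-linear map `d` such that there is a Jordan
derivation `δ` with `d(a²) = a·d(a) + δ(a)·a`. -/
def IsGenJordanDeriv (d : A → X) : Prop :=
  (∀ x y : A, d (x + y) = d x + d y) ∧ (∀ (μ : ℂ) (x : A), d (μ • x) = μ • d x) ∧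
    ∃ δ : A → X, IsJordanDeriv δ ∧ ∀ a : A, d (a ^ 2) = a • d a + op a • δ a

theorem gold_aux (d T : A → X)
    (hA : ∀ y : A, op y • T y = d (y * y) - y • d y)
    (hB : ∀ a b : A, T (a * b) = a • T b + op b • T a)
    (u v : A) (huv : u * v = v * u) :
    d ((u*v)*(u*v)) - (u*v) • d (u*v)
      = u • (op u • (d (v*v) - v • d v)) + op v • (op v • (d (u*u) - u • d u)) := by
  have t1 : op (u*v) • (u • T v) = u • (op u • (d (v*v) - v • d v)) := by
    rw [← hA v]
    rw [← smul_comm u (op (u*v)) (T v)]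
    congr 1
    rw [← mul_smul, ← op_mul, huv]
  have t2 : op (u*v) • (op v • T u) = op v • (op v • (d (u*u) - u • d u)) := by
    rw [← hA u]
    rw [← mul_smul, ← mul_smul, ← mul_smul]
    congr 1
    rw [← op_mul, ← op_mul, ← op_mul]
    congr 1
    rw [← mul_assoc, ← huv, mul_assoc]
  calc d ((u*v)*(u*v)) - (u*v) • d (u*v) = op (u*v) • T (u*v) := (hA _).symm
    _ = op (u*v) • (u • T v) + op (u*v) • (op v • T u) := by rw [hB u v, smul_add]
    _ = _ := by rw [t1, t2]
theorem key_alg (d T : A → X)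
    (hdadd : ∀ a b : A, d (a + b) = d a + d b)
    (hA : ∀ y : A, op y • T y = d (y * y) - y • d y)
    (hB : ∀ a b : A, T (a * b) = a • T b + op b • T a)
    (x : A) :
    d (x * x) = x • d x + op x • d x - op x • (x • d 1) := by
  have hd0 : d 0 = 0 := by
    have h := hdadd 0 0
    rw [add_zero] at h
    exact (left_eq_add.mp h)
  have hdneg : ∀ a : A, d (-a) = - d a := by
    intro a
    have h := hdadd a (-a)
    rw [add_neg_cancel, hd0] at h
    exact eq_neg_of_add_eq_zero_right h.symm
  have hdsub : ∀ a b : A, d (a - b) = d a - d b := by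
    intro a b
    rw [sub_eq_add_neg, hdadd, hdneg, ← sub_eq_add_neg]
  have hswap : ∀ mm : X, op x • x • mm = x • op x • mm := fun mm => (smul_comm x (op x) mm).symm
  have hC : ∀ mm : X, (12:ℂ) • mm = 12 • mm := by
    intro mm
    rw [show (12:ℂ) = ((12:ℕ):ℂ) by norm_num, Nat.cast_smul_eq_nsmul]
  have r1 : (x + 1)*(x + 1) = x*x + (x + x) + 1 := by noncomm_ring
  have r2 : (x - 1)*(x - 1) = x*x - (x + x) + 1 := by noncomm_ring
  have r3 : (x + 1)*(x - 1) = x*x - 1 := by noncomm_ring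
  have r4 : (x - 1)*(x + 1) = x*x - 1 := by noncomm_ring
  have q1 : (x*x + (x + x) + 1)*(x*x + (x + x) + 1)
      = x*(x*(x*x)) + (x*(x*x) + x*(x*x) + x*(x*x) + x*(x*x))
        + (x*x + x*x + x*x + x*x + x*x + x*x) + (x + x + x + x) + 1 := by noncomm_ring
  have q2 : (x*x - (x + x) + 1)*(x*x - (x + x) + 1)
      = x*(x*(x*x)) - (x*(x*x) + x*(x*x) + x*(x*x) + x*(x*x))
        + (x*x + x*x + x*x + x*x + x*x + x*x) - (x + x + x + x) + 1 := by noncomm_ring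
  have q3 : (x*x - 1)*(x*x - 1) = x*(x*(x*x)) - (x*x + x*x) + 1 := by noncomm_ring
  have hcm : (x + 1)*(x - 1) = (x - 1)*(x + 1) := by noncomm_ring
  have g11 := gold_aux d T hA hB (x + 1) (x + 1) rfl
  have g12 := gold_aux d T hA hB (x + 1) (x - 1) hcm
  have g21 := gold_aux d T hA hB (x - 1) (x + 1) hcm.symm
  have g22 := gold_aux d T hA hB (x - 1) (x - 1) rfl
  have expand : (d (((x + 1)*(x + 1))*((x + 1)*(x + 1))) - ((x + 1)*(x + 1)) • d ((x + 1)*(x + 1))) - (d (((x + 1)*(x - 1))*((x + 1)*(x - 1))) - ((x + 1)*(x - 1)) • d ((x + 1)*(x - 1))) - (d (((x - 1)*(x + 1))*((x - 1)*(x + 1))) - ((x - 1)*(x + 1)) • d ((x - 1)*(x + 1))) + (d (((x - 1)*(x - 1))*((x - 1)*(x - 1))) - ((x - 1)*(x - 1)) • d ((x - 1)*(x - 1))) - (((x + 1) • (op (x + 1) • (d ((x + 1)*(x + 1)) - (x + 1) • d (x + 1))) + op (x + 1) • (op (x + 1) • (d ((x + 1)*(x + 1)) - (x + 1) • d (x +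 1)))) - ((x + 1) • (op (x + 1) • (d ((x - 1)*(x - 1)) - (x - 1) • d (x - 1))) + op (x - 1) • (op (x - 1) • (d ((x + 1)*(x + 1)) - (x + 1) • d (x + 1)))) - ((x - 1) • (op (x - 1) • (d ((x + 1)*(x + 1)) - (x + 1) • d (x + 1))) + op (x + 1) • (op (x + 1) • (d ((x - 1)*(x - 1)) - (x - 1) • d (x - 1)))) + ((x - 1) • (op (x - 1) • (d ((x - 1)*(x - 1)) - (x - 1) • d (x - 1))) + op (x - 1) • (op (x - 1) • (d ((x - 1)*(x - 1)) - (x - 1) • d (x - 1)))))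
      = (12:ℂ) • (d (x*x) - (x • d x + op x • d x - op x • (x • d 1))) := by
    simp only [r1, r2, r3, r4]
    simp only [q1, q2, q3]
    simp only [hdadd, hdsub, hC]
    simp only [op_add, op_sub, op_one, add_smul, sub_smul, one_smul, mul_smul, smul_add,
      smul_sub, hswap]
    abel
  have comb : (d (((x + 1)*(x + 1))*((x + 1)*(x + 1))) - ((x + 1)*(x + 1)) • d ((x + 1)*(x + 1))) - (d (((x + 1)*(x - 1))*((x + 1)*(x - 1))) - ((x + 1)*(x - 1)) • d ((x + 1)*(x - 1))) - (d (((x - 1)*(x + 1))*((x - 1)*(x + 1))) - ((x - 1)*(x + 1)) • d ((x - 1)*(x + 1))) + (d (((x - 1)*(x - 1))*((x - 1)*(x - 1))) - ((x - 1)*(x - 1)) • d ((x - 1)*(x - 1))) = ((x + 1) • (op (x + 1) • (d ((x + 1)*(x + 1)) - (x + 1) • d (x + 1))) + op (x + 1) • (op (x + 1) • (d ((x + 1)*(x + 1)) - (x + 1) • d (x + 1)))) - ((x + 1) • (op (x + 1) • (d ((x - 1)*(x - 1)) - (x - 1) • d (x - 1))) + op (x - 1) • (op (x - 1) • (d ((x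 + 1)*(x + 1)) - (x + 1) • d (x + 1)))) - ((x - 1) • (op (x - 1) • (d ((x + 1)*(x + 1)) - (x + 1) • d (x + 1))) + op (x + 1) • (op (x + 1) • (d ((x - 1)*(x - 1)) - (x - 1) • d (x - 1)))) + ((x - 1) • (op (x - 1) • (d ((x - 1)*(x - 1)) - (x - 1) • d (x - 1))) + op (x - 1) • (op (x - 1) • (d ((x - 1)*(x - 1)) - (x - 1) • d (x - 1)))) := by
    rw [g11, g12, g21, g22]
  have h12 : (12:ℂ) • (d (x*x) - (x • d x + op x • d x - op x • (x • d 1))) = 0 := by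
    rw [← expand, comb, sub_self]
  have h0 : d (x*x) - (x • d x + op x • d x - op x • (x • d 1)) = 0 := by
    have hcg := congrArg (fun mm : X => (12:ℂ)⁻¹ • mm) h12
    simp only [smul_smul, smul_zero] at hcg
    norm_num at hcg
    exact hcg
  exact sub_eq_zero.mp h0

theorem unimodular_pair (w : ℂ) (hw : ‖w‖ ≤ 2) :
    ∃ μ₁ μ₂ : ℂ, ‖μ₁‖ = 1 ∧ ‖μ₂‖ = 1 ∧ μ₁ + μ₂ = w := by
  rcases eq_or_ne w 0 with rfl | hw0
  · exact ⟨1, -1, by norm_num, by norm_num, by ring⟩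
  · set r : ℝ := ‖w‖ / 2 with hr
    have hwpos : 0 < ‖w‖ := norm_pos_iff.mpr hw0
    have hr0 : 0 < r := by positivity
    have hr1 : r ≤ 1 := by rw [hr]; linarith
    set s : ℝ := Real.sqrt (1 - r ^ 2) with hs
    have hs2 : s ^ 2 = 1 - r ^ 2 := Real.sq_sqrt (by nlinarith)
    have hu : ‖w / ‖w‖‖ = 1 := by simp [norm_div, hw0]
    have hnorm1 : ‖(r : ℂ) + s * Complex.I‖ = 1 := by
      rw [Complex.norm_add_mul_I]
      rw [show r ^ 2 + s ^ 2 = 1 by rw [hs2]; ring]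
      exact Real.sqrt_one
    have hnorm2 : ‖(r : ℂ) - s * Complex.I‖ = 1 := by
      rw [show ((r:ℂ) - s * Complex.I) = (r:ℂ) + ((-s : ℝ) : ℂ) * Complex.I by push_cast; ring]
      rw [Complex.norm_add_mul_I]
      rw [show r ^ 2 + (-s) ^ 2 = 1 by rw [neg_pow]; rw [hs2]; ring]
      exact Real.sqrt_one
    refine ⟨w / ‖w‖ * ((r:ℂ) + s * Complex.I), w / ‖w‖ * ((r:ℂ) - s * Complex.I), ?_, ?_, ?_⟩
    · rw [norm_mul, hu, hnorm1, one_mul]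
    · rw [norm_mul, hu, hnorm2, one_mul]
    · have h2 : w / ‖w‖ * ((r:ℂ) + s * Complex.I) + w / ‖w‖ * ((r:ℂ) - s * Complex.I)
          = w / ‖w‖ * (2 * r) := by ring
      have h3 : ((2:ℂ) * r) = (‖w‖ : ℂ) := by rw [hr]; push_cast; ring
      rw [h2, h3, div_mul_cancel₀]
      exact_mod_cast hwpos.ne'

noncomputable def Fsc (f : A → X) (n : ℕ) (a : A) : X := ((2:ℂ)^n)⁻¹ • f ((2:ℂ)^n • a)

theorem norm_two_pow_c (n : ℕ) : ‖(2:ℂ)^n‖ = (2:ℝ)^n := by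
  rw [norm_pow]; norm_num

theorem two_pow_c_ne (n : ℕ) : ((2:ℂ)^n) ≠ 0 := pow_ne_zero _ two_ne_zero

theorem N1 (n : ℕ) (v : X) : ‖((2:ℂ)^n)⁻¹ • v‖ = ((2:ℝ)^n)⁻¹ * ‖v‖ := by
  rw [norm_smul, norm_inv, norm_two_pow_c]

variable {f g : A → X} {φ : A → A → A → ℝ}

-- specializations of the main functional inequality
theorem S1 (hf0 : f 0 = 0)
    (h : ∀ (a b c : A) (μ : ℂ), ‖μ‖ = 1 →
      max ‖f (μ • a + μ • b + c ^ 2) - μ • f a - μ • f b - c • f c - op c • g c‖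
        ‖g (μ • (a * b) + μ • c) - μ • a • g b - μ • op b • g a - μ • g c‖ ≤ φ a b c)
    (a b : A) (μ : ℂ) (hμ : ‖μ‖ = 1) :
    ‖f (μ • a + μ • b) - μ • f a - μ • f b‖ ≤ φ a b 0 := by
  have h1 := le_trans (le_max_left _ _) (h a b 0 μ hμ)
  simpa using h1

theorem S2 (hf0 : f 0 = 0)
    (h : ∀ (a b c : A) (μ : ℂ), ‖μ‖ = 1 →
      max ‖f (μ • a + μ • b + c ^ 2) - μ • f a - μ • f b - c • f c - op c • g c‖
        ‖g (μ • (a * b) + μ • c) - μ • a • g b - μ • op b • g a - μ • g c‖ ≤ φ a b c)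
    (c : A) :
    ‖f (c * c) - c • f c - op c • g c‖ ≤ φ 0 0 c := by
  have h1 := le_trans (le_max_left _ _) (h 0 0 c 1 (by norm_num))
  rw [sq] at h1
  simpa [hf0] using h1

theorem S3 (hg0 : g 0 = 0)
    (h : ∀ (a b c : A) (μ : ℂ), ‖μ‖ = 1 →
      max ‖f (μ • a + μ • b + c ^ 2) - μ • f a - μ • f b - c • f c - op c • g c‖
        ‖g (μ • (a * b) + μ • c) - μ • a • g b - μ • op b • g a - μ • g c‖ ≤ φ a b c)
    (a b : A) :
    ‖g (a * b) - a • g b - op b • g a‖ ≤ φ a b 0 := by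
  have h1 := le_trans (le_max_right _ _) (h a b 0 1 (by norm_num))
  simpa [hg0] using h1

theorem fstep (hf0 : f 0 = 0)
    (h : ∀ (a b c : A) (μ : ℂ), ‖μ‖ = 1 →
      max ‖f (μ • a + μ • b + c ^ 2) - μ • f a - μ • f b - c • f c - op c • g c‖
        ‖g (μ • (a * b) + μ • c) - μ • a • g b - μ • op b • g a - μ • g c‖ ≤ φ a b c)
    (a : A) (n : ℕ) :
    dist (Fsc f n a) (Fsc f (n+1) a)
      ≤ 2⁻¹ * (((2:ℝ)^n)⁻¹ * φ ((2:ℂ)^n • a) ((2:ℂ)^n • a) 0) := by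
  have hs := S1 hf0 h ((2:ℂ)^n • a) ((2:ℂ)^n • a) 1 (by norm_num)
  simp only [one_smul] at hs
  have key : Fsc f n a - Fsc f (n+1) a
      = ((2:ℂ)^(n+1))⁻¹ • (f ((2:ℂ)^n • a) + f ((2:ℂ)^n • a)
          - f ((2:ℂ)^n • a + (2:ℂ)^n • a)) := by
    show ((2:ℂ)^n)⁻¹ • f ((2:ℂ)^n • a) - ((2:ℂ)^(n+1))⁻¹ • f ((2:ℂ)^(n+1) • a) = _
    have h1 : (2:ℂ)^(n+1) • a = (2:ℂ)^n • a + (2:ℂ)^n • a := by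
      rw [pow_succ, mul_comm, mul_smul, two_smul]
    have h2 : ((2:ℂ)^n)⁻¹ = ((2:ℂ)^(n+1))⁻¹ * 2 := by
      rw [pow_succ]
      field_simp
    rw [h1, h2, mul_smul, two_smul, ← smul_sub]
  have hnorm : dist (Fsc f n a) (Fsc f (n+1) a)
      = ((2:ℝ)^(n+1))⁻¹ * ‖f ((2:ℂ)^n • a) + f ((2:ℂ)^n • a)
          - f ((2:ℂ)^n • a + (2:ℂ)^n • a)‖ := by
    rw [dist_eq_norm, key, N1]
  rw [hnorm]
  have hrev : ‖f ((2:ℂ)^n • a) + f ((2:ℂ)^n • a) - f ((2:ℂ)^n • a + (2:ℂ)^n • a)‖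
      = ‖f ((2:ℂ)^n • a + (2:ℂ)^n • a) - f ((2:ℂ)^n • a) - f ((2:ℂ)^n • a)‖ := by
    rw [show f ((2:ℂ)^n • a) + f ((2:ℂ)^n • a) - f ((2:ℂ)^n • a + (2:ℂ)^n • a)
      = -(f ((2:ℂ)^n • a + (2:ℂ)^n • a) - f ((2:ℂ)^n • a) - f ((2:ℂ)^n • a)) by abel, norm_neg]
  rw [hrev, show ((2:ℝ)^(n+1))⁻¹ = 2⁻¹ * ((2:ℝ)^n)⁻¹ by rw [pow_succ]; field_simp]
  rw [mul_assoc]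
  exact mul_le_mul_of_nonneg_left (mul_le_mul_of_nonneg_left hs (by positivity)) (by norm_num)

-- hypothesis bundle abbreviation for the big inequality
theorem summable_step (hφ0 : ∀ a b c : A, 0 ≤ φ a b c)
    (hsum : ∀ a b c : A, Summable fun i : ℕ =>
      ((2 : ℝ) ^ i)⁻¹ * φ ((2 : ℂ) ^ i • a) ((2 : ℂ) ^ i • b) ((2 : ℂ) ^ i • c))
    (a b : A) :
    Summable (fun n : ℕ => ((2:ℝ)^n)⁻¹ * φ ((2:ℂ)^n • a) ((2:ℂ)^n • b) 0) := by
  have := hsum a b 0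
  simpa [smul_zero] using this

theorem exists_flim (hφ0 : ∀ a b c : A, 0 ≤ φ a b c) (hf0 : f 0 = 0)
    (h : ∀ (a b c : A) (μ : ℂ), ‖μ‖ = 1 →
      max ‖f (μ • a + μ • b + c ^ 2) - μ • f a - μ • f b - c • f c - op c • g c‖
        ‖g (μ • (a * b) + μ • c) - μ • a • g b - μ • op b • g a - μ • g c‖ ≤ φ a b c)
    (hsum : ∀ a b c : A, Summable fun i : ℕ =>
      ((2 : ℝ) ^ i)⁻¹ * φ ((2 : ℂ) ^ i • a) ((2 : ℂ) ^ i • b) ((2 : ℂ) ^ i • c))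
    (a : A) : ∃ l : X, Tendsto (fun n => Fsc f n a) atTop (𝓝 l) := by
  have hc : CauchySeq (fun n => Fsc f n a) := by
    apply cauchySeq_of_summable_dist
    apply Summable.of_nonneg_of_le (fun n => dist_nonneg) (fstep hf0 h a)
    exact ((summable_step hφ0 hsum a a).mul_left 2⁻¹)
  exact cauchySeq_tendsto_of_complete hc

theorem flim_bound (hφ0 : ∀ a b c : A, 0 ≤ φ a b c) (hf0 : f 0 = 0)
    (h : ∀ (a b c : A) (μ : ℂ), ‖μ‖ = 1 →
      max ‖f (μ • a + μ • b + c ^ 2) - μ • f a - μ • f b - c • f c - op c • g c‖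
        ‖g (μ • (a * b) + μ • c) - μ • a • g b - μ • op b • g a - μ • g c‖ ≤ φ a b c)
    (hsum : ∀ a b c : A, Summable fun i : ℕ =>
      ((2 : ℝ) ^ i)⁻¹ * φ ((2 : ℂ) ^ i • a) ((2 : ℂ) ^ i • b) ((2 : ℂ) ^ i • c))
    {d : A → X} (hd : ∀ a : A, Tendsto (fun n => Fsc f n a) atTop (𝓝 (d a))) (a : A) :
    ‖f a - d a‖ ≤ 2⁻¹ * ∑' i : ℕ, ((2 : ℝ) ^ i)⁻¹ * φ ((2 : ℂ) ^ i • a) ((2 : ℂ) ^ i • a) 0 := by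
  have hb := dist_le_tsum_of_dist_le_of_tendsto₀
    (fun n => 2⁻¹ * (((2:ℝ)^n)⁻¹ * φ ((2:ℂ)^n • a) ((2:ℂ)^n • a) 0))
    (fstep hf0 h a) ((summable_step hφ0 hsum a a).mul_left 2⁻¹) (hd a)
  rw [tsum_mul_left] at hb
  have h0 : Fsc f 0 a = f a := by
    show ((2:ℂ)^0)⁻¹ • f ((2:ℂ)^0 • a) = f a
    norm_num
  rwa [h0, dist_eq_norm] at hb

theorem flim_add (hφ0 : ∀ a b c : A, 0 ≤ φ a b c) (hf0 : f 0 = 0)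
    (h : ∀ (a b c : A) (μ : ℂ), ‖μ‖ = 1 →
      max ‖f (μ • a + μ • b + c ^ 2) - μ • f a - μ • f b - c • f c - op c • g c‖
        ‖g (μ • (a * b) + μ • c) - μ • a • g b - μ • op b • g a - μ • g c‖ ≤ φ a b c)
    (hsum : ∀ a b c : A, Summable fun i : ℕ =>
      ((2 : ℝ) ^ i)⁻¹ * φ ((2 : ℂ) ^ i • a) ((2 : ℂ) ^ i • b) ((2 : ℂ) ^ i • c))
    {d : A → X} (hd : ∀ a : A, Tendsto (fun n => Fsc f n a) atTop (𝓝 (d a))) (a b : A) :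
    d (a + b) = d a + d b := by
  have hbound : ∀ n : ℕ, ‖Fsc f n (a+b) - Fsc f n a - Fsc f n b‖
      ≤ ((2:ℝ)^n)⁻¹ * φ ((2:ℂ)^n • a) ((2:ℂ)^n • b) 0 := by
    intro n
    have hs := S1 hf0 h ((2:ℂ)^n • a) ((2:ℂ)^n • b) 1 (by norm_num)
    simp only [one_smul] at hs
    have key : Fsc f n (a+b) - Fsc f n a - Fsc f n b
        = ((2:ℂ)^n)⁻¹ • (f ((2:ℂ)^n • a + (2:ℂ)^n • b) - f ((2:ℂ)^n • a) - f ((2:ℂ)^n • b)) := by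
      show ((2:ℂ)^n)⁻¹ • f ((2:ℂ)^n • (a+b)) - ((2:ℂ)^n)⁻¹ • f ((2:ℂ)^n • a)
          - ((2:ℂ)^n)⁻¹ • f ((2:ℂ)^n • b) = _
      rw [smul_add, smul_sub, smul_sub]
    rw [key, N1]
    exact mul_le_mul_of_nonneg_left hs (by positivity)
  have h1 : Tendsto (fun n => Fsc f n (a+b) - Fsc f n a - Fsc f n b) atTop
      (𝓝 (d (a+b) - d a - d b)) := ((hd (a+b)).sub (hd a)).sub (hd b)
  have h2 : Tendsto (fun n => Fsc f n (a+b) - Fsc f n a - Fsc f n b) atTop (𝓝 0) := by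
    apply squeeze_zero_norm hbound
    exact (summable_step hφ0 hsum a b).tendsto_atTop_zero
  have h3 := tendsto_nhds_unique h1 h2
  rwa [sub_sub, sub_eq_zero] at h3

theorem flim_unimod (hφ0 : ∀ a b c : A, 0 ≤ φ a b c) (hf0 : f 0 = 0)
    (h : ∀ (a b c : A) (μ : ℂ), ‖μ‖ = 1 →
      max ‖f (μ • a + μ • b + c ^ 2) - μ • f a - μ • f b - c • f c - op c • g c‖
        ‖g (μ • (a * b) + μ • c) - μ • a • g b - μ • op b • g a - μ • g c‖ ≤ φ a b c)
    (hsum : ∀ a b c : A, Summable fun i : ℕ =>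
      ((2 : ℝ) ^ i)⁻¹ * φ ((2 : ℂ) ^ i • a) ((2 : ℂ) ^ i • b) ((2 : ℂ) ^ i • c))
    {d : A → X} (hd : ∀ a : A, Tendsto (fun n => Fsc f n a) atTop (𝓝 (d a)))
    (μ : ℂ) (hμ : ‖μ‖ = 1) (a : A) :
    d (μ • a) = μ • d a := by
  have hbound : ∀ n : ℕ, ‖Fsc f n (μ • a) - μ • Fsc f n a‖
      ≤ ((2:ℝ)^n)⁻¹ * φ ((2:ℂ)^n • a) 0 0 := by
    intro n
    have hs := S1 hf0 h ((2:ℂ)^n • a) (0:A) μ hμ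
    simp only [smul_zero, add_zero, hf0, sub_zero] at hs
    have key : Fsc f n (μ • a) - μ • Fsc f n a
        = ((2:ℂ)^n)⁻¹ • (f (μ • ((2:ℂ)^n • a)) - μ • f ((2:ℂ)^n • a)) := by
      show ((2:ℂ)^n)⁻¹ • f ((2:ℂ)^n • μ • a) - μ • (((2:ℂ)^n)⁻¹ • f ((2:ℂ)^n • a)) = _
      rw [smul_comm μ (((2:ℂ)^n)⁻¹), ← smul_sub, smul_comm ((2:ℂ)^n) μ]
    rw [key, N1]
    exact mul_le_mul_of_nonneg_left hs (by positivity)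
  have h1 : Tendsto (fun n => Fsc f n (μ • a) - μ • Fsc f n a) atTop
      (𝓝 (d (μ • a) - μ • d a)) := (hd (μ • a)).sub ((hd a).const_smul μ)
  have h2 : Tendsto (fun n => Fsc f n (μ • a) - μ • Fsc f n a) atTop (𝓝 0) := by
    apply squeeze_zero_norm hbound
    have := hsum a 0 0
    simp only [smul_zero] at this ⊢
    exact this.tendsto_atTop_zero
  have h3 := tendsto_nhds_unique h1 h2
  rwa [sub_eq_zero] at h3


theorem clinear_of_additive (d : A → X)
    (hadd : ∀ a b : A, d (a + b) = d a + d b)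
    (huni : ∀ (μ : ℂ), ‖μ‖ = 1 → ∀ a : A, d (μ • a) = μ • d a)
    (ζ : ℂ) (a : A) : d (ζ • a) = ζ • d a := by
  have hd0 : d 0 = 0 := by
    have h := hadd 0 0
    rw [add_zero] at h
    exact (left_eq_add.mp h)
  have hnat : ∀ (n : ℕ) (v : A), d (n • v) = n • d v := by
    intro n
    induction n with
    | zero => intro v; simp [hd0]
    | succ k ih => intro v; rw [succ_nsmul, hadd, ih, succ_nsmul]
  rcases eq_or_ne ζ 0 with rfl | hζ
  · simp [hd0]
  · set n : ℕ := ⌊‖ζ‖⌋₊ + 1 with hn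
    have hnne : (n:ℂ) ≠ 0 := by
      have : n ≠ 0 := by omega
      exact_mod_cast this
    have hnpos : (0:ℝ) < (n:ℝ) := by positivity
    set w : ℂ := ζ / (n:ℂ) with hwdef
    have hw : ‖w‖ ≤ 2 := by
      rw [hwdef, norm_div]
      have h1 : ‖ζ‖ < (n:ℝ) := by
        rw [hn]
        push_cast
        exact Nat.lt_floor_add_one _
      have h2 : ‖(n:ℂ)‖ = (n:ℝ) := by
        simp
      rw [h2, div_le_iff₀ hnpos]
      nlinarith [norm_nonneg ζ]
    obtain ⟨μ₁, μ₂, hμ₁, hμ₂, hμsum⟩ := unimodular_pair w hw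
    have hζw : (n:ℂ) * w = ζ := by
      rw [hwdef]
      field_simp
    have hwa : d (w • a) = w • d a := by
      rw [← hμsum, add_smul, hadd, huni μ₁ hμ₁, huni μ₂ hμ₂, ← add_smul]
    calc d (ζ • a) = d ((n:ℂ) • w • a) := by rw [smul_smul, hζw]
      _ = (n:ℕ) • d (w • a) := by rw [Nat.cast_smul_eq_nsmul, hnat]
      _ = (n:ℂ) • (w • d a) := by rw [hwa, Nat.cast_smul_eq_nsmul]
      _ = ζ • d a := by rw [smul_smul, hζw]


-- ==================== g-side ====================

theorem gprod (hg0 : g 0 = 0)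
    (h : ∀ (a b c : A) (μ : ℂ), ‖μ‖ = 1 →
      max ‖f (μ • a + μ • b + c ^ 2) - μ • f a - μ • f b - c • f c - op c • g c‖
        ‖g (μ • (a * b) + μ • c) - μ • a • g b - μ • op b • g a - μ • g c‖ ≤ φ a b c)
    (a b : A) (n : ℕ) :
    ‖Fsc g (n+n) (a*b) - a • Fsc g n b - op b • Fsc g n a‖
      ≤ ((2:ℝ)^(n+n))⁻¹ * φ ((2:ℂ)^n • a) ((2:ℂ)^n • b) 0 := by
  have hs := S3 (f := f) hg0 h ((2:ℂ)^n • a) ((2:ℂ)^n • b)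
  have m1 : ((2:ℂ)^n • a) * ((2:ℂ)^n • b) = (2:ℂ)^(n+n) • (a*b) := by
    rw [smul_mul_smul_comm, ← pow_add]
  have m2 : ((2:ℂ)^n • a) • g ((2:ℂ)^n • b) = (2:ℂ)^n • (a • g ((2:ℂ)^n • b)) :=
    smul_assoc _ _ _
  have m3 : op ((2:ℂ)^n • b) • g ((2:ℂ)^n • a) = (2:ℂ)^n • (op b • g ((2:ℂ)^n • a)) := by
    rw [op_smul, smul_assoc]
  rw [m1, m2, m3] at hs
  have e1 : a • Fsc g n b = ((2:ℂ)^(n+n))⁻¹ • ((2:ℂ)^n • (a • g ((2:ℂ)^n • b))) := by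
    show a • (((2:ℂ)^n)⁻¹ • g ((2:ℂ)^n • b)) = _
    rw [smul_comm a, smul_smul]
    congr 1
    rw [pow_add]
    field_simp
  have e2 : op b • Fsc g n a = ((2:ℂ)^(n+n))⁻¹ • ((2:ℂ)^n • (op b • g ((2:ℂ)^n • a))) := by
    show op b • (((2:ℂ)^n)⁻¹ • g ((2:ℂ)^n • a)) = _
    rw [smul_comm (op b), smul_smul]
    congr 1
    rw [pow_add]
    field_simp
  have key : Fsc g (n+n) (a*b) - a • Fsc g n b - op b • Fsc g n a
      = ((2:ℂ)^(n+n))⁻¹ • (g ((2:ℂ)^(n+n) • (a*b)) - (2:ℂ)^n • (a • g ((2:ℂ)^n • b))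
          - (2:ℂ)^n • (op b • g ((2:ℂ)^n • a))) := by
    rw [e1, e2]
    show ((2:ℂ)^(n+n))⁻¹ • g ((2:ℂ)^(n+n) • (a*b)) - _ - _ = _
    rw [← smul_sub, ← smul_sub]
  rw [key, N1]
  exact mul_le_mul_of_nonneg_left hs (by positivity)

theorem fgy (hf0 : f 0 = 0)
    (h : ∀ (a b c : A) (μ : ℂ), ‖μ‖ = 1 →
      max ‖f (μ • a + μ • b + c ^ 2) - μ • f a - μ • f b - c • f c - op c • g c‖
        ‖g (μ • (a * b) + μ • c) - μ • a • g b - μ • op b • g a - μ • g c‖ ≤ φ a b c)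
    (y : A) (n : ℕ) :
    ‖Fsc f (n+n) (y*y) - y • Fsc f n y - op y • Fsc g n y‖
      ≤ ((2:ℝ)^(n+n))⁻¹ * φ 0 0 ((2:ℂ)^n • y) := by
  have hs := S2 (g := g) hf0 h ((2:ℂ)^n • y)
  have m1 : ((2:ℂ)^n • y) * ((2:ℂ)^n • y) = (2:ℂ)^(n+n) • (y*y) := by
    rw [smul_mul_smul_comm, ← pow_add]
  have m2 : ((2:ℂ)^n • y) • f ((2:ℂ)^n • y) = (2:ℂ)^n • (y • f ((2:ℂ)^n • y)) :=
    smul_assoc _ _ _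
  have m3 : op ((2:ℂ)^n • y) • g ((2:ℂ)^n • y) = (2:ℂ)^n • (op y • g ((2:ℂ)^n • y)) := by
    rw [op_smul, smul_assoc]
  rw [m1, m2, m3] at hs
  have e1 : y • Fsc f n y = ((2:ℂ)^(n+n))⁻¹ • ((2:ℂ)^n • (y • f ((2:ℂ)^n • y))) := by
    show y • (((2:ℂ)^n)⁻¹ • f ((2:ℂ)^n • y)) = _
    rw [smul_comm y, smul_smul]
    congr 1
    rw [pow_add]
    field_simp
  have e2 : op y • Fsc g n y = ((2:ℂ)^(n+n))⁻¹ • ((2:ℂ)^n • (op y • g ((2:ℂ)^n • y))) := by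
    show op y • (((2:ℂ)^n)⁻¹ • g ((2:ℂ)^n • y)) = _
    rw [smul_comm (op y), smul_smul]
    congr 1
    rw [pow_add]
    field_simp
  have key : Fsc f (n+n) (y*y) - y • Fsc f n y - op y • Fsc g n y
      = ((2:ℂ)^(n+n))⁻¹ • (f ((2:ℂ)^(n+n) • (y*y)) - (2:ℂ)^n • (y • f ((2:ℂ)^n • y))
          - (2:ℂ)^n • (op y • g ((2:ℂ)^n • y))) := by
    rw [e1, e2]
    show ((2:ℂ)^(n+n))⁻¹ • f ((2:ℂ)^(n+n) • (y*y)) - _ - _ = _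
    rw [← smul_sub, ← smul_sub]
  rw [key, N1]
  exact mul_le_mul_of_nonneg_left hs (by positivity)

theorem sumM (hφ0 : ∀ a b c : A, 0 ≤ φ a b c)
    (hsum : ∀ a b c : A, Summable fun i : ℕ =>
      ((2 : ℝ) ^ i)⁻¹ * φ ((2 : ℂ) ^ i • a) ((2 : ℂ) ^ i • b) ((2 : ℂ) ^ i • c))
    (a b : A) :
    Summable (fun n : ℕ => ((2:ℝ)^(n+n))⁻¹ * φ ((2:ℂ)^n • a) ((2:ℂ)^n • b) 0) := by
  apply Summable.of_nonneg_of_le (fun n => mul_nonneg (by positivity) (hφ0 _ _ _)) _ (summable_step hφ0 hsum a b)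
  intro n
  apply mul_le_mul_of_nonneg_right _ (hφ0 _ _ _)
  apply inv_anti₀ (by positivity)
  exact pow_le_pow_right₀ (by norm_num) (by omega)

theorem sumC (hφ0 : ∀ a b c : A, 0 ≤ φ a b c)
    (hsum : ∀ a b c : A, Summable fun i : ℕ =>
      ((2 : ℝ) ^ i)⁻¹ * φ ((2 : ℂ) ^ i • a) ((2 : ℂ) ^ i • b) ((2 : ℂ) ^ i • c))
    (c : A) :
    Summable (fun n : ℕ => ((2:ℝ)^(n+n))⁻¹ * φ 0 0 ((2:ℂ)^n • c)) := by
  have h0 := hsum 0 0 c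
  simp only [smul_zero] at h0
  apply Summable.of_nonneg_of_le (fun n => mul_nonneg (by positivity) (hφ0 _ _ _)) _ h0
  intro n
  apply mul_le_mul_of_nonneg_right _ (hφ0 _ _ _)
  apply inv_anti₀ (by positivity)
  exact pow_le_pow_right₀ (by norm_num) (by omega)

theorem pow2_tendsto : Tendsto (fun j : ℕ => 2^j) atTop atTop :=
  tendsto_pow_atTop_atTop_of_one_lt (by norm_num)

theorem addself_tendsto : Tendsto (fun n : ℕ => n + n) atTop atTop :=
  tendsto_atTop_mono (fun n => Nat.le_add_right n n) tendsto_id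

theorem gstep1 (hg0 : g 0 = 0)
    (h : ∀ (a b c : A) (μ : ℂ), ‖μ‖ = 1 →
      max ‖f (μ • a + μ • b + c ^ 2) - μ • f a - μ • f b - c • f c - op c • g c‖
        ‖g (μ • (a * b) + μ • c) - μ • a • g b - μ • op b • g a - μ • g c‖ ≤ φ a b c)
    (hsum : ∀ a b c : A, Summable fun i : ℕ =>
      ((2 : ℝ) ^ i)⁻¹ * φ ((2 : ℂ) ^ i • a) ((2 : ℂ) ^ i • b) ((2 : ℂ) ^ i • c))
    (y : A) (n : ℕ) :
    ‖Fsc g (n+n) y - y • Fsc g n 1 - Fsc g n y‖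
      ≤ ((2:ℝ)^(n+n))⁻¹ * φ ((2:ℂ)^n • y) ((2:ℂ)^n • 1) 0 := by
  have hs := gprod (f := f) hg0 h y 1 n
  simpa using hs

theorem fg1 (hf0 : f 0 = 0)
    (h : ∀ (a b c : A) (μ : ℂ), ‖μ‖ = 1 →
      max ‖f (μ • a + μ • b + c ^ 2) - μ • f a - μ • f b - c • f c - op c • g c‖
        ‖g (μ • (a * b) + μ • c) - μ • a • g b - μ • op b • g a - μ • g c‖ ≤ φ a b c)
    (hsum : ∀ a b c : A, Summable fun i : ℕ =>
      ((2 : ℝ) ^ i)⁻¹ * φ ((2 : ℂ) ^ i • a) ((2 : ℂ) ^ i • b) ((2 : ℂ) ^ i • c))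
    (n : ℕ) :
    ‖Fsc f (n+n) 1 - Fsc f n 1 - Fsc g n 1‖
      ≤ ((2:ℝ)^(n+n))⁻¹ * φ 0 0 ((2:ℂ)^n • 1) := by
  have hs := fgy (g := g) hf0 h 1 n
  simpa using hs

theorem exists_glim (hφ0 : ∀ a b c : A, 0 ≤ φ a b c) (hf0 : f 0 = 0) (hg0 : g 0 = 0)
    (h : ∀ (a b c : A) (μ : ℂ), ‖μ‖ = 1 →
      max ‖f (μ • a + μ • b + c ^ 2) - μ • f a - μ • f b - c • f c - op c • g c‖
        ‖g (μ • (a * b) + μ • c) - μ • a • g b - μ • op b • g a - μ • g c‖ ≤ φ a b c)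
    (hsum : ∀ a b c : A, Summable fun i : ℕ =>
      ((2 : ℝ) ^ i)⁻¹ * φ ((2 : ℂ) ^ i • a) ((2 : ℂ) ^ i • b) ((2 : ℂ) ^ i • c))
    {d : A → X} (hd : ∀ a : A, Tendsto (fun n => Fsc f n a) atTop (𝓝 (d a)))
    (y : A) : ∃ t : X, Tendsto (fun j => Fsc g (2^j) y) atTop (𝓝 t) := by
  set v : ℕ → X := fun j => Fsc g (2^j) y - y • Fsc f (2^j) 1 with hv
  have hvc : CauchySeq v := by
    apply cauchySeq_of_summable_dist
    have hb : ∀ j : ℕ, dist (v j) (v (j+1))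
        ≤ (((2:ℝ)^(2^j + 2^j))⁻¹ * φ ((2:ℂ)^(2^j) • y) ((2:ℂ)^(2^j) • 1) 0)
          + ‖y‖ * (((2:ℝ)^(2^j + 2^j))⁻¹ * φ 0 0 ((2:ℂ)^(2^j) • 1)) := by
      intro j
      set n : ℕ := 2^j with hn
      have h2 : (2:ℕ)^(j+1) = n + n := by rw [pow_succ, mul_two]
      have hsplit : v (j+1) - v j
          = (Fsc g (n+n) y - y • Fsc g n 1 - Fsc g n y)
            - y • (Fsc f (n+n) 1 - Fsc f n 1 - Fsc g n 1) := by
        simp only [hv, h2]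
        rw [smul_sub, smul_sub]
        abel
      rw [dist_eq_norm', hsplit]
      refine (norm_sub_le _ _).trans (add_le_add (gstep1 hg0 h hsum y n) ?_)
      refine (norm_smul_le y _).trans ?_
      exact mul_le_mul_of_nonneg_left (fg1 hf0 h hsum n) (norm_nonneg y)
    apply Summable.of_nonneg_of_le (fun j => dist_nonneg) hb
    have s1 : Summable (fun j : ℕ =>
        ((2:ℝ)^(2^j + 2^j))⁻¹ * φ ((2:ℂ)^(2^j) • y) ((2:ℂ)^(2^j) • 1) 0) :=
      (sumM hφ0 hsum y 1).comp_injective (Nat.pow_right_injective (le_refl 2))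
    have s2 : Summable (fun j : ℕ =>
        ‖y‖ * (((2:ℝ)^(2^j + 2^j))⁻¹ * φ 0 0 ((2:ℂ)^(2^j) • 1))) :=
      (((sumC hφ0 hsum 1).comp_injective (Nat.pow_right_injective (le_refl 2))).mul_left ‖y‖)
    exact s1.add s2
  obtain ⟨V, hV⟩ := cauchySeq_tendsto_of_complete hvc
  refine ⟨V + y • d 1, ?_⟩
  have he : (fun j => Fsc g (2^j) y) = fun j => v j + y • Fsc f (2^j) 1 := by
    funext j
    simp [hv]
  rw [he]
  exact hV.add (((hd 1).comp pow2_tendsto).const_smul y)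

theorem glim_A (hφ0 : ∀ a b c : A, 0 ≤ φ a b c) (hf0 : f 0 = 0)
    (h : ∀ (a b c : A) (μ : ℂ), ‖μ‖ = 1 →
      max ‖f (μ • a + μ • b + c ^ 2) - μ • f a - μ • f b - c • f c - op c • g c‖
        ‖g (μ • (a * b) + μ • c) - μ • a • g b - μ • op b • g a - μ • g c‖ ≤ φ a b c)
    (hsum : ∀ a b c : A, Summable fun i : ℕ =>
      ((2 : ℝ) ^ i)⁻¹ * φ ((2 : ℂ) ^ i • a) ((2 : ℂ) ^ i • b) ((2 : ℂ) ^ i • c))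
    {d : A → X} (hd : ∀ a : A, Tendsto (fun n => Fsc f n a) atTop (𝓝 (d a)))
    {T : A → X} (hT : ∀ y : A, Tendsto (fun j => Fsc g (2^j) y) atTop (𝓝 (T y)))
    (y : A) : op y • T y = d (y*y) - y • d y := by
  have h0 : Tendsto (fun n => Fsc f (n+n) (y*y) - y • Fsc f n y - op y • Fsc g n y)
      atTop (𝓝 0) := by
    apply squeeze_zero_norm (fgy hf0 h y)
    exact (sumC hφ0 hsum y).tendsto_atTop_zero
  have hbr : Tendsto (fun n => Fsc f (n+n) (y*y) - y • Fsc f n y) atTop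
      (𝓝 (d (y*y) - y • d y)) :=
    ((hd (y*y)).comp addself_tendsto).sub ((hd y).const_smul y)
  have hfull : Tendsto (fun n => op y • Fsc g n y) atTop (𝓝 (d (y*y) - y • d y)) := by
    have he : (fun n => op y • Fsc g n y)
        = fun n => (Fsc f (n+n) (y*y) - y • Fsc f n y)
          - (Fsc f (n+n) (y*y) - y • Fsc f n y - op y • Fsc g n y) := by
      funext n
      abel
    rw [he]
    simpa using hbr.sub h0
  have hsub : Tendsto (fun j => op y • Fsc g (2^j) y) atTop (𝓝 (op y • T y)) :=
    (hT y).const_smul (op y)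
  exact tendsto_nhds_unique hsub (hfull.comp pow2_tendsto)

theorem glim_B (hφ0 : ∀ a b c : A, 0 ≤ φ a b c) (hg0 : g 0 = 0)
    (h : ∀ (a b c : A) (μ : ℂ), ‖μ‖ = 1 →
      max ‖f (μ • a + μ • b + c ^ 2) - μ • f a - μ • f b - c • f c - op c • g c‖
        ‖g (μ • (a * b) + μ • c) - μ • a • g b - μ • op b • g a - μ • g c‖ ≤ φ a b c)
    (hsum : ∀ a b c : A, Summable fun i : ℕ =>
      ((2 : ℝ) ^ i)⁻¹ * φ ((2 : ℂ) ^ i • a) ((2 : ℂ) ^ i • b) ((2 : ℂ) ^ i • c))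
    {T : A → X} (hT : ∀ y : A, Tendsto (fun j => Fsc g (2^j) y) atTop (𝓝 (T y)))
    (a b : A) : T (a*b) = a • T b + op b • T a := by
  have h0 : Tendsto (fun j => Fsc g (2^j + 2^j) (a*b) - a • Fsc g (2^j) b
      - op b • Fsc g (2^j) a) atTop (𝓝 0) := by
    apply squeeze_zero_norm (fun j => gprod hg0 h a b (2^j))
    exact ((sumM hφ0 hsum a b).comp_injective
      (Nat.pow_right_injective (le_refl 2))).tendsto_atTop_zero
  have h1 : Tendsto (fun j => Fsc g (2^j + 2^j) (a*b)) atTop (𝓝 (T (a*b))) := by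
    have he : (fun j => Fsc g (2^j + 2^j) (a*b)) = fun j => Fsc g (2^(j+1)) (a*b) := by
      funext j
      rw [pow_succ, mul_two]
    rw [he]
    exact (hT (a*b)).comp (tendsto_add_atTop_nat 1)
  have h2 : Tendsto (fun j => Fsc g (2^j+2^j) (a*b) - a • Fsc g (2^j) b - op b • Fsc g (2^j) a)
      atTop (𝓝 (T (a*b) - a • T b - op b • T a)) :=
    (h1.sub ((hT b).const_smul a)).sub ((hT a).const_smul (op b))
  have h3 := tendsto_nhds_unique h2 h0
  rwa [sub_sub, sub_eq_zero] at h3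

theorem uniq_aux (hφ0 : ∀ a b c : A, 0 ≤ φ a b c)
    (hsum : ∀ a b c : A, Summable fun i : ℕ =>
      ((2 : ℝ) ^ i)⁻¹ * φ ((2 : ℂ) ^ i • a) ((2 : ℂ) ^ i • b) ((2 : ℂ) ^ i • c))
    {d d' : A → X}
    (hds : ∀ (ζ : ℂ) (a : A), d (ζ • a) = ζ • d a)
    (hd's : ∀ (ζ : ℂ) (a : A), d' (ζ • a) = ζ • d' a)
    (hbd : ∀ a : A, ‖f a - d a‖ ≤ 2⁻¹ * ∑' i : ℕ,
      ((2 : ℝ) ^ i)⁻¹ * φ ((2 : ℂ) ^ i • a) ((2 : ℂ) ^ i • a) 0)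
    (hbd' : ∀ a : A, ‖f a - d' a‖ ≤ 2⁻¹ * ∑' i : ℕ,
      ((2 : ℝ) ^ i)⁻¹ * φ ((2 : ℂ) ^ i • a) ((2 : ℂ) ^ i • a) 0) :
    d' = d := by
  funext a
  have hn : ∀ n : ℕ, ‖d' a - d a‖
      ≤ ∑' i : ℕ, ((2:ℝ)^(i+n))⁻¹ * φ ((2:ℂ)^(i+n) • a) ((2:ℂ)^(i+n) • a) 0 := by
    intro n
    have e1 : d' a - d a = ((2:ℂ)^n)⁻¹ • (d' ((2:ℂ)^n • a) - d ((2:ℂ)^n • a)) := by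
      rw [hd's, hds, ← smul_sub, smul_smul, inv_mul_cancel₀ (two_pow_c_ne n), one_smul]
    have e2 : ‖d' ((2:ℂ)^n • a) - d ((2:ℂ)^n • a)‖
        ≤ ‖f ((2:ℂ)^n • a) - d' ((2:ℂ)^n • a)‖ + ‖f ((2:ℂ)^n • a) - d ((2:ℂ)^n • a)‖ := by
      have : d' ((2:ℂ)^n • a) - d ((2:ℂ)^n • a)
          = (f ((2:ℂ)^n • a) - d ((2:ℂ)^n • a)) - (f ((2:ℂ)^n • a) - d' ((2:ℂ)^n • a)) := by
        abel
      rw [this]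
      rw [add_comm]
      exact norm_sub_le _ _
    have e3 : ‖f ((2:ℂ)^n • a) - d' ((2:ℂ)^n • a)‖ + ‖f ((2:ℂ)^n • a) - d ((2:ℂ)^n • a)‖
        ≤ ∑' i : ℕ, ((2:ℝ)^i)⁻¹ * φ ((2:ℂ)^i • ((2:ℂ)^n • a)) ((2:ℂ)^i • ((2:ℂ)^n • a)) 0 := by
      have b1 := hbd' ((2:ℂ)^n • a)
      have b2 := hbd ((2:ℂ)^n • a)
      have : (2:ℝ)⁻¹ * (∑' i : ℕ, ((2:ℝ)^i)⁻¹ * φ ((2:ℂ)^i • ((2:ℂ)^n • a)) ((2:ℂ)^i • ((2:ℂ)^n • a)) 0)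
          + 2⁻¹ * (∑' i : ℕ, ((2:ℝ)^i)⁻¹ * φ ((2:ℂ)^i • ((2:ℂ)^n • a)) ((2:ℂ)^i • ((2:ℂ)^n • a)) 0)
          = ∑' i : ℕ, ((2:ℝ)^i)⁻¹ * φ ((2:ℂ)^i • ((2:ℂ)^n • a)) ((2:ℂ)^i • ((2:ℂ)^n • a)) 0 := by
        ring
      linarith
    have e4 : ((2:ℝ)^n)⁻¹ * ∑' i : ℕ,
        ((2:ℝ)^i)⁻¹ * φ ((2:ℂ)^i • ((2:ℂ)^n • a)) ((2:ℂ)^i • ((2:ℂ)^n • a)) 0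
        = ∑' i : ℕ, ((2:ℝ)^(i+n))⁻¹ * φ ((2:ℂ)^(i+n) • a) ((2:ℂ)^(i+n) • a) 0 := by
      rw [← tsum_mul_left]
      congr 1
      funext i
      rw [smul_smul, ← pow_add, pow_add ((2:ℝ)) i n]
      ring
    calc ‖d' a - d a‖ = ((2:ℝ)^n)⁻¹ * ‖d' ((2:ℂ)^n • a) - d ((2:ℂ)^n • a)‖ := by
          rw [e1, N1]
      _ ≤ ((2:ℝ)^n)⁻¹ * (‖f ((2:ℂ)^n • a) - d' ((2:ℂ)^n • a)‖
            + ‖f ((2:ℂ)^n • a) - d ((2:ℂ)^n • a)‖) :=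
          mul_le_mul_of_nonneg_left e2 (by positivity)
      _ ≤ ((2:ℝ)^n)⁻¹ * ∑' i : ℕ,
            ((2:ℝ)^i)⁻¹ * φ ((2:ℂ)^i • ((2:ℂ)^n • a)) ((2:ℂ)^i • ((2:ℂ)^n • a)) 0 :=
          mul_le_mul_of_nonneg_left e3 (by positivity)
      _ = _ := e4
  have hlim : Tendsto (fun n => ∑' i : ℕ,
      ((2:ℝ)^(i+n))⁻¹ * φ ((2:ℂ)^(i+n) • a) ((2:ℂ)^(i+n) • a) 0) atTop (𝓝 0) :=
    tendsto_sum_nat_add (fun k => ((2:ℝ)^k)⁻¹ * φ ((2:ℂ)^k • a) ((2:ℂ)^k • a) 0)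
  have h0 : ‖d' a - d a‖ ≤ 0 := ge_of_tendsto hlim (Eventually.of_forall hn)
  have := norm_le_zero_iff.mp h0
  rw [sub_eq_zero] at this
  exact this

theorem stmt (f g : A → X) (φ : A → A → A → ℝ)
    (hφ0 : ∀ a b c : A, 0 ≤ φ a b c)
    (hf0 : f 0 = 0) (hg0 : g 0 = 0) (hg1 : g 1 = 0)
    (h : ∀ (a b c : A) (μ : ℂ), ‖μ‖ = 1 →
      max ‖f (μ • a + μ • b + c ^ 2) - μ • f a - μ • f b - c • f c - op c • g c‖
        ‖g (μ • (a * b) + μ • c) - μ • a • g b - μ • op b • g a - μ • g c‖ ≤ φ a b c)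
    (hsum : ∀ a b c : A, Summable fun i : ℕ =>
      ((2 : ℝ) ^ i)⁻¹ * φ ((2 : ℂ) ^ i • a) ((2 : ℂ) ^ i • b) ((2 : ℂ) ^ i • c)) :
    ∃ d : A → X, (∀ a : A, Tendsto (fun n : ℕ => ((2 : ℂ) ^ n)⁻¹ • f ((2 : ℂ) ^ n • a)) atTop (𝓝 (d a))) ∧
      IsGenJordanDeriv d ∧ (∀ a : A, ‖f a - d a‖ ≤ 2⁻¹ * ∑' i : ℕ, ((2 : ℝ) ^ i)⁻¹ * φ ((2 : ℂ) ^ i • a) ((2 : ℂ) ^ i • a) 0) ∧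
      ∀ d' : A → X, IsGenJordanDeriv d' → (∀ a : A, ‖f a - d' a‖ ≤ 2⁻¹ * ∑' i : ℕ, ((2 : ℝ) ^ i)⁻¹ * φ ((2 : ℂ) ^ i • a) ((2 : ℂ) ^ i • a) 0) → d' = d := by
  choose d hd using fun a => exists_flim hφ0 hf0 h hsum a
  have hdadd : ∀ a b : A, d (a+b) = d a + d b := flim_add hφ0 hf0 h hsum hd
  have hdsmul : ∀ (ζ : ℂ) (a : A), d (ζ • a) = ζ • d a :=
    clinear_of_additive d hdadd (fun μ hμ a => flim_unimod hφ0 hf0 h hsum hd μ hμ a)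
  choose T hT using fun y => exists_glim hφ0 hf0 hg0 h hsum hd y
  have hA : ∀ y : A, op y • T y = d (y*y) - y • d y := glim_A hφ0 hf0 h hsum hd hT
  have hB : ∀ a b : A, T (a*b) = a • T b + op b • T a := glim_B hφ0 hg0 h hsum hT
  have hmain : ∀ x : A, d (x*x) = x • d x + op x • d x - op x • (x • d 1) :=
    key_alg d T hdadd hA hB
  refine ⟨d, hd, ⟨hdadd, hdsmul, ?_⟩, flim_bound hφ0 hf0 h hsum hd, ?_⟩
  · refine ⟨fun a => d a - a • d 1, ⟨?_, ?_, ?_⟩, ?_⟩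
    · intro x y
      dsimp only
      rw [hdadd, add_smul]
      abel
    · intro μ x
      dsimp only
      rw [hdsmul, smul_assoc, ← smul_sub]
    · intro a
      show d (a^2) - (a^2) • d 1 = a • (d a - a • d 1) + op a • (d a - a • d 1)
      rw [sq, hmain a, mul_smul, smul_sub, smul_sub]
      abel
    · intro a
      show d (a^2) = a • d a + op a • (d a - a • d 1)
      rw [sq, hmain a, smul_sub]
      abel
  · intro d' hd' hb'
    obtain ⟨hadd', hsmul', _⟩ := hd'
    exact uniq_aux hφ0 hsum hdsmul hsmul' (flim_bound hφ0 hf0 h hsum hd) hb'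
end
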